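/- Universal approximation of two-layer AdderNets (Theorem 1): Let d ∈ ℕ, let K ⊆ ℝ^d be a compact set, and let f: ℝ^d → ℝ be integrable on K. Then for every ε > 0 there exist t ∈ ℕ, scalars a₁,…,a_t ∈ ℝ, b₁,…,b_t ∈ ℝ, and vectors W₁,…,W_t ∈ ℝ^d such that ∫_K | f(x) − Σ_{i=1}^t aᵢ · ReLU(‖Wᵢ − x‖₁ + bᵢ) | dx ≤ ε, where the integral is with respect to Lebesgue measure on ℝ^d. (By Lemma 1, every function of the form Σᵢ aᵢ ReLU(‖Wᵢ − x‖₁ + bᵢ) is realized by a two-layer AdderNet on K, so two-layer AdderNets are dense in L¹(K).) -/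

import Mathlib

open MeasureTheory Set Metric Filter
open scoped ENNReal NNReal Topology

namespace AdderAux

/-- The function computed by a two-layer AdderNet. -/
noncomputable def netfun (d t : ℕ) (a b : Fin t → ℝ) (W : Fin t → Fin d → ℝ) :
    (Fin d → ℝ) → ℝ :=
  fun x => ∑ i, a i * max ((∑ j, |W i j - x j|) + b i) 0

/-- A function is (exactly) an AdderNet. -/
def IsNet (d : ℕ) (g : (Fin d → ℝ) → ℝ) : Prop :=
  ∃ t a b W, g = netfun d t a b W

lemma isNet_zero (d : ℕ) : IsNet d 0 := by
  refine ⟨0, 0, 0, 0, ?_⟩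
  funext x
  simp [netfun]

lemma isNet_add {d : ℕ} {g₁ g₂ : (Fin d → ℝ) → ℝ} (h₁ : IsNet d g₁) (h₂ : IsNet d g₂) :
    IsNet d (g₁ + g₂) := by
  obtain ⟨t₁, a₁, b₁, W₁, rfl⟩ := h₁
  obtain ⟨t₂, a₂, b₂, W₂, rfl⟩ := h₂
  refine ⟨t₁ + t₂, Fin.append a₁ a₂, Fin.append b₁ b₂, Fin.append W₁ W₂, ?_⟩
  funext x
  simp only [Pi.add_apply, netfun, Fin.sum_univ_add, Fin.append_left, Fin.append_right]

lemma isNet_smul {d : ℕ} (c : ℝ) {g : (Fin d → ℝ) → ℝ} (h : IsNet d g) :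
    IsNet d (fun x => c * g x) := by
  obtain ⟨t, a, b, W, rfl⟩ := h
  refine ⟨t, fun i => c * a i, b, W, ?_⟩
  funext x
  simp [netfun, Finset.mul_sum, mul_assoc]

lemma isNet_neuron {d : ℕ} (W : Fin d → ℝ) (b : ℝ) :
    IsNet d (fun x => max ((∑ j, |W j - x j|) + b) 0) := by
  refine ⟨1, fun _ => 1, fun _ => b, fun _ => W, ?_⟩
  funext x
  simp [netfun]

lemma isNet_dist {d : ℕ} (W : Fin d → ℝ) :
    IsNet d (fun x => ∑ j, |W j - x j|) := by
  have h := isNet_neuron W 0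
  obtain ⟨t, a, b, W', hW⟩ := h
  refine ⟨t, a, b, W', ?_⟩
  rw [← hW]
  funext x
  have : (0:ℝ) ≤ ∑ j, |W j - x j| := Finset.sum_nonneg fun j _ => abs_nonneg _
  simp [max_eq_left, this]

lemma isNet_const {d : ℕ} (c : ℝ) : IsNet d (fun _ => c) := by
  have h1 := isNet_smul c (isNet_neuron (d := d) 0 1)
  have h2 := isNet_smul (-c) (isNet_dist (d := d) 0)
  have h := isNet_add h1 h2
  convert h using 1
  funext x
  have hd : (0:ℝ) ≤ ∑ j, |(0:Fin d → ℝ) j - x j| := Finset.sum_nonneg fun j _ => abs_nonneg _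
  have : max ((∑ j, |(0:Fin d → ℝ) j - x j|) + 1) 0 = (∑ j, |(0:Fin d → ℝ) j - x j|) + 1 :=
    max_eq_left (by linarith)
  simp only [Pi.add_apply, this]
  ring


variable {d : ℕ}

/-- ℓ¹ distance to a center. -/
noncomputable def D (c : Fin d → ℝ) (x : Fin d → ℝ) : ℝ := ∑ j, |c j - x j|

/-- closed ℓ¹ ball. -/
def Bl1 (c : Fin d → ℝ) (r : ℝ) : Set (Fin d → ℝ) := {x | ∑ j, |c j - x j| ≤ r}

lemma D_nonneg (c x : Fin d → ℝ) : 0 ≤ D c x :=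
  Finset.sum_nonneg fun j _ => abs_nonneg _

lemma continuous_D (c : Fin d → ℝ) : Continuous (D c) := by
  apply continuous_finset_sum
  intro j _
  exact (continuous_const.sub (continuous_apply j)).abs

lemma mem_Bl1 {c : Fin d → ℝ} {r : ℝ} {x : Fin d → ℝ} : x ∈ Bl1 c r ↔ D c x ≤ r := Iff.rfl

lemma isClosed_Bl1 (c : Fin d → ℝ) (r : ℝ) : IsClosed (Bl1 c r) :=
  isClosed_le (continuous_D c) continuous_const

lemma measurableSet_Bl1 (c : Fin d → ℝ) (r : ℝ) : MeasurableSet (Bl1 c r) :=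
  (isClosed_Bl1 c r).measurableSet

lemma Bl1_subset_closedBall {c : Fin d → ℝ} {r : ℝ} (hr : 0 ≤ r) :
    Bl1 c r ⊆ closedBall c r := by
  intro x hx
  rw [mem_closedBall, dist_pi_le_iff hr]
  intro j
  rw [Real.dist_eq]
  calc |x j - c j| = |c j - x j| := abs_sub_comm _ _
    _ ≤ ∑ i, |c i - x i| :=
      Finset.single_le_sum (f := fun i => |c i - x i|) (fun i _ => abs_nonneg _)
        (Finset.mem_univ j)
    _ ≤ r := hx

lemma closedBall_subset_Bl1 {c : Fin d → ℝ} {δ : ℝ} (hδ : 0 ≤ δ) :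
    closedBall c δ ⊆ Bl1 c (d * δ) := by
  intro x hx
  rw [mem_closedBall, dist_pi_le_iff hδ] at hx
  have : ∀ j : Fin d, |c j - x j| ≤ δ := by
    intro j
    have := hx j
    rwa [Real.dist_eq, abs_sub_comm] at this
  calc (∑ j, |c j - x j|) ≤ ∑ _j : Fin d, δ := Finset.sum_le_sum fun j _ => this j
    _ = d * δ := by simp [mul_comm]

lemma ball_subset_Bl1 (hd : 0 < d) {c : Fin d → ℝ} {r : ℝ} (hr : 0 < r) :
    ball c (r / d) ⊆ Bl1 c r := by
  intro x hx
  have hrd : 0 < r / (d : ℝ) := by positivity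
  rw [mem_ball, dist_pi_lt_iff hrd] at hx
  have : ∀ j : Fin d, |c j - x j| ≤ r / d := by
    intro j
    have := hx j
    rw [Real.dist_eq, abs_sub_comm] at this
    exact this.le
  calc (∑ j, |c j - x j|) ≤ ∑ _j : Fin d, r / d := Finset.sum_le_sum fun j _ => this j
    _ = d * (r / d) := by simp [mul_comm]
    _ = r := by field_simp

/-- the plateau tent function, equal to 1 on `Bl1 c r`, 0 outside `Bl1 c R`. -/
noncomputable def tent (c : Fin d → ℝ) (r R : ℝ) : (Fin d → ℝ) → ℝ :=
  fun x => (R - r)⁻¹ * (max (R - D c x) 0 - max (r - D c x) 0)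

lemma isNet_pyr (c : Fin d → ℝ) (r : ℝ) : IsNet d (fun x => max (r - D c x) 0) := by
  have h := isNet_add (isNet_add (isNet_const (d := d) r)
    (isNet_smul (-1) (isNet_dist c))) (isNet_neuron c (-r))
  convert h using 1
  funext x
  simp only [Pi.add_apply]
  rcases le_total (D c x) r with h' | h'
  · rw [max_eq_left (by simp [D] at h' ⊢; linarith), max_eq_right (by simp [D] at h' ⊢; linarith)]
    simp [D]; ring
  · rw [max_eq_right (by simp [D] at h' ⊢; linarith), max_eq_left (by simp [D] at h' ⊢; linarith)]
    simp [D]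

lemma isNet_tent (c : Fin d → ℝ) (r R : ℝ) : IsNet d (tent c r R) := by
  have h := isNet_smul ((R - r)⁻¹)
    (isNet_add (isNet_pyr c R) (isNet_smul (-1) (isNet_pyr c r)))
  convert h using 1
  funext x
  simp only [tent, Pi.add_apply]
  ring

lemma tent_nonneg {c : Fin d → ℝ} {r R : ℝ} (h : r ≤ R) (x : Fin d → ℝ) :
    0 ≤ tent c r R x := by
  apply mul_nonneg (inv_nonneg.2 (by linarith))
  have : max (r - D c x) 0 ≤ max (R - D c x) 0 := by
    apply max_le_max _ le_rfl; linarith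
  linarith

lemma tent_eq_one {c : Fin d → ℝ} {r R : ℝ} (h : r < R) {x : Fin d → ℝ}
    (hx : x ∈ Bl1 c r) : tent c r R x = 1 := by
  rw [mem_Bl1] at hx
  rw [tent, max_eq_left (by linarith), max_eq_left (by linarith)]
  rw [show R - D c x - (r - D c x) = R - r by ring]
  exact inv_mul_cancel₀ (by linarith)

lemma tent_le_one {c : Fin d → ℝ} {r R : ℝ} (h : r < R) (x : Fin d → ℝ) :
    tent c r R x ≤ 1 := by
  rw [tent]
  rw [inv_mul_le_iff₀ (by linarith), mul_one]
  rcases le_total (R - D c x) 0 with h' | h'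
  · rw [max_eq_right h', max_eq_right (by linarith)]; linarith
  · rw [max_eq_left h']
    rcases le_total (r - D c x) 0 with h'' | h''
    · rw [max_eq_right h'']; linarith
    · rw [max_eq_left h'']; linarith

lemma tent_eq_zero {c : Fin d → ℝ} {r R : ℝ} (h : r < R) {x : Fin d → ℝ}
    (hx : x ∉ Bl1 c R) : tent c r R x = 0 := by
  rw [mem_Bl1, not_le] at hx
  rw [tent, max_eq_right (by linarith), max_eq_right (by linarith)]
  simp

lemma tent_le_ind_shell {c : Fin d → ℝ} {r R : ℝ} (h : r < R) {x : Fin d → ℝ}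
    (hx : x ∉ Bl1 c r) :
    tent c r R x ≤ (Bl1 c R \ Bl1 c r).indicator (fun _ => (1:ℝ)) x := by
  by_cases hR : x ∈ Bl1 c R
  · rw [indicator_of_mem (show x ∈ Bl1 c R \ Bl1 c r from ⟨hR, hx⟩)]
    exact tent_le_one h x
  · rw [tent_eq_zero h hR, indicator_of_notMem (fun hs => hR hs.1)]


lemma vol_Bl1_pos (hd : 0 < d) (c : Fin d → ℝ) {r : ℝ} (hr : 0 < r) :
    0 < volume (Bl1 c r) := by
  refine lt_of_lt_of_le ?_ (measure_mono (ball_subset_Bl1 hd hr))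
  exact measure_ball_pos volume c (by positivity)

lemma vol_Bl1_lt_top (c : Fin d → ℝ) (r : ℝ) : volume (Bl1 c r) < ∞ := by
  rcases le_or_gt 0 r with hr | hr
  · exact lt_of_le_of_lt (measure_mono (Bl1_subset_closedBall hr)) measure_closedBall_lt_top
  · have : Bl1 c r = ∅ := by
      ext x
      simp only [mem_Bl1, mem_empty_iff_false, iff_false, not_le]
      exact lt_of_lt_of_le hr (D_nonneg c x)
    simp [this]

lemma vol_doubling (hd : 0 < d) (c : Fin d → ℝ) {r : ℝ} (hr : 0 < r) :
    volume (closedBall c (3 * r)) ≤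
      (((3 * (d:ℝ)) ^ d).toNNReal : ℝ≥0∞) * volume (Bl1 c r) := by
  have hd' : (d:ℝ) ≠ 0 := Nat.cast_ne_zero.2 hd.ne'
  have h1 : volume (closedBall c (3 * r)) = ENNReal.ofReal ((2 * (3 * r)) ^ d) := by
    rw [Real.volume_pi_closedBall c (by positivity)]
    simp
  have h2 : closedBall c (r / d) ⊆ Bl1 c r := by
    have := closedBall_subset_Bl1 (c := c) (δ := r / d) (by positivity)
    rwa [show (d:ℝ) * (r / d) = r by field_simp] at this
  have h3 : ENNReal.ofReal ((2 * (r / d)) ^ d) ≤ volume (Bl1 c r) := by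
    have hv := Real.volume_pi_closedBall c (r := r / d) (by positivity)
    rw [Fintype.card_fin] at hv
    rw [← hv]
    exact measure_mono h2
  calc volume (closedBall c (3 * r)) = ENNReal.ofReal ((2 * (3 * r)) ^ d) := h1
    _ = ENNReal.ofReal ((3 * (d:ℝ)) ^ d * (2 * (r / d)) ^ d) := by
        congr 1
        rw [← mul_pow]
        congr 1
        field_simp
    _ = ENNReal.ofReal ((3 * (d:ℝ)) ^ d) * ENNReal.ofReal ((2 * (r / d)) ^ d) :=
        ENNReal.ofReal_mul (by positivity)
    _ ≤ ENNReal.ofReal ((3 * (d:ℝ)) ^ d) * volume (Bl1 c r) := by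
        exact mul_le_mul_right h3 _
    _ = (((3 * (d:ℝ)) ^ d).toNNReal : ℝ≥0∞) * volume (Bl1 c r) := by
        rw [ENNReal.ofReal]

lemma exists_shell (c : Fin d → ℝ) {r : ℝ} (hr : 0 ≤ r) {ε : ℝ≥0∞} (hε : ε ≠ 0) :
    ∃ R, r < R ∧ volume (Bl1 c R \ Bl1 c r) ≤ ε := by
  set s : ℕ → Set (Fin d → ℝ) := fun n => Bl1 c (r + 1 / (n + 1)) with hs
  have hmono : Antitone s := by
    intro n m hnm x hx
    rw [hs, mem_Bl1] at hx ⊢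
    refine hx.trans (by
      have : 1 / ((m:ℝ) + 1) ≤ 1 / ((n:ℝ) + 1) := by
        apply one_div_le_one_div_of_le (by positivity)
        exact_mod_cast Nat.succ_le_succ hnm
      linarith)
  have hinter : (⋂ n, s n) = Bl1 c r := by
    ext x
    simp only [mem_iInter, hs, mem_Bl1]
    constructor
    · intro h
      refine le_of_forall_pos_le_add fun δ hδ => ?_
      obtain ⟨n, hn⟩ := exists_nat_one_div_lt hδ
      exact (h n).trans (by push_cast; linarith)
    · intro h n
      have : (0:ℝ) < 1 / (n + 1) := by positivity
      linarith
  have hfin : volume (Bl1 c r) ≠ ∞ := (vol_Bl1_lt_top c r).ne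
  have htend : Filter.Tendsto (fun n => volume (s n)) Filter.atTop (𝓝 (volume (Bl1 c r))) := by
    have := tendsto_measure_iInter_atTop (μ := volume) (s := s)
      (fun n => (measurableSet_Bl1 _ _).nullMeasurableSet) hmono
      ⟨0, (vol_Bl1_lt_top _ _).ne⟩
    rwa [hinter] at this
  have hlt : volume (Bl1 c r) < volume (Bl1 c r) + ε := ENNReal.lt_add_right hfin hε
  have hev : ∀ᶠ n in Filter.atTop, volume (s n) < volume (Bl1 c r) + ε :=
    htend.eventually_lt_const hlt
  obtain ⟨n, hn⟩ := hev.exists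
  have hrlt : r < r + 1 / (n + 1) := by
    have : (0:ℝ) < 1 / ((n:ℝ) + 1) := by positivity
    linarith
  refine ⟨r + 1 / (n + 1), hrlt, ?_⟩
  rw [measure_diff ?_ (measurableSet_Bl1 _ _).nullMeasurableSet hfin]
  · rw [tsub_le_iff_right, add_comm ε]; exact hn.le
  · intro x hx
    rw [mem_Bl1] at hx ⊢
    have : (0:ℝ) < 1 / (n + 1) := by positivity
    linarith

lemma isNet_continuous {g : (Fin d → ℝ) → ℝ} (h : IsNet d g) : Continuous g := by
  obtain ⟨t, a, b, W, rfl⟩ := h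
  apply continuous_finset_sum
  intro i _
  apply continuous_const.mul
  apply Continuous.max _ continuous_const
  apply Continuous.add _ continuous_const
  apply continuous_finset_sum
  intro j _
  exact (continuous_const.sub (continuous_apply j)).abs

lemma isNet_finset_sum {ι : Type*} (F : Finset ι) (f : ι → (Fin d → ℝ) → ℝ)
    (h : ∀ i ∈ F, IsNet d (f i)) : IsNet d (fun x => ∑ i ∈ F, f i x) := by
  classical
  induction F using Finset.induction_on with
  | empty => simp only [Finset.sum_empty]; exact isNet_zero d
  | insert i F' hni ih =>
    simp only [Finset.sum_insert hni]
    exact isNet_add (h i (Finset.mem_insert_self i F'))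
      (ih fun j hj => h j (Finset.mem_insert_of_mem hj))

set_option maxHeartbeats 1000000 in
lemma approx_open (hd : 0 < d) {U : Set (Fin d → ℝ)} (hU : IsOpen U) (hfin : volume U ≠ ∞)
    {ε : ℝ} (hε : 0 < ε) (K : Set (Fin d → ℝ)) :
    ∃ g, IsNet d g ∧
      ∫ x in K, |U.indicator (fun _ => (1:ℝ)) x - g x| ≤ ε := by
  classical
  -- Vitali covering by ℓ¹ balls
  obtain ⟨u, hut, hucnt, hudisj, hucov⟩ :=
    Vitali.exists_disjoint_covering_ae (α := Fin d → ℝ) (ι := (Fin d → ℝ) × ℝ)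
      volume U {p : (Fin d → ℝ) × ℝ | 0 < p.2 ∧ Bl1 p.1 p.2 ⊆ U}
      (((3 * (d:ℝ)) ^ d).toNNReal) Prod.snd Prod.fst (fun p => Bl1 p.1 p.2)
      (fun p hp => Bl1_subset_closedBall hp.1.le)
      (fun p hp => vol_doubling hd p.1 hp.1)
      (fun p hp => ⟨p.1, interior_maximal (ball_subset_Bl1 hd hp.1) isOpen_ball
        (mem_ball_self (by have := hp.1; positivity))⟩)
      (fun p _ => isClosed_Bl1 _ _)
      (fun x hx e he => by
        obtain ⟨δ, hδ, hball⟩ := Metric.isOpen_iff.1 hU x hx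
        refine ⟨(x, min (δ/2) e), ⟨lt_min (by linarith) he, ?_⟩, min_le_right _ _, rfl⟩
        refine (Bl1_subset_closedBall (by positivity)).trans ?_
        refine (closedBall_subset_ball ?_).trans hball
        have : min (δ/2) e ≤ δ/2 := min_le_left _ _
        linarith)
  -- extract a finite subfamily capturing most of the measure
  have hBmeas : ∀ p : ↑u, MeasurableSet (Bl1 p.val.1 p.val.2) :=
    fun p => measurableSet_Bl1 _ _
  have hBsubU : ∀ p : ↑u, Bl1 p.val.1 p.val.2 ⊆ U :=
    fun p => (hut p.2).2
  have hrpos : ∀ p : ↑u, 0 < p.val.2 := fun p => (hut p.2).1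
  have hεhalf : (ENNReal.ofReal (ε/2)) ≠ 0 := by
    simp [ENNReal.ofReal_eq_zero, not_le]
    linarith
  obtain ⟨F, hF⟩ : ∃ F : Finset ↑u,
      volume (U \ ⋃ p ∈ F, Bl1 p.val.1 p.val.2) ≤ ENNReal.ofReal (ε/2) := by
    by_cases hU0 : volume U ≤ ENNReal.ofReal (ε/2)
    · exact ⟨∅, le_trans (measure_mono diff_subset) hU0⟩
    · push_neg at hU0
      have hdisj' : u.PairwiseDisjoint (fun p : (Fin d → ℝ) × ℝ => Bl1 p.1 p.2) := hudisj
      have hsum : volume (⋃ p ∈ u, Bl1 p.1 p.2) = ∑' p : ↑u, volume (Bl1 p.val.1 p.val.2) :=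
        measure_biUnion hucnt hdisj' (fun p _ => measurableSet_Bl1 _ _)
      have hle : volume U ≤ ∑' p : ↑u, volume (Bl1 p.val.1 p.val.2) := by
        rw [← hsum]
        have hsub0 : U ⊆ (U \ ⋃ p ∈ u, Bl1 p.1 p.2) ∪ ⋃ p ∈ u, Bl1 p.1 p.2 := by
          intro x hx
          by_cases h : x ∈ ⋃ p ∈ u, Bl1 p.1 p.2
          · exact Or.inr h
          · exact Or.inl ⟨hx, h⟩
        calc volume U ≤ volume ((U \ ⋃ p ∈ u, Bl1 p.1 p.2) ∪ ⋃ p ∈ u, Bl1 p.1 p.2) :=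
              measure_mono hsub0
          _ ≤ volume (U \ ⋃ p ∈ u, Bl1 p.1 p.2) + volume (⋃ p ∈ u, Bl1 p.1 p.2) :=
              measure_union_le _ _
          _ = volume (⋃ p ∈ u, Bl1 p.1 p.2) := by rw [hucov, zero_add]
      have hsub : volume U - ENNReal.ofReal (ε/2) < ∑' p : ↑u, volume (Bl1 p.val.1 p.val.2) :=
        lt_of_lt_of_le (ENNReal.sub_lt_self hfin (fun h => by simp [h] at hU0) hεhalf) hle
      rw [ENNReal.tsum_eq_iSup_sum, lt_iSup_iff] at hsub
      obtain ⟨F, hFsum⟩ := hsub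
      refine ⟨F, ?_⟩
      have hWsub : (⋃ p ∈ F, Bl1 p.val.1 p.val.2) ⊆ U := by
        intro x hx
        obtain ⟨p, _, hp⟩ := mem_iUnion₂.1 hx
        exact hBsubU p hp
      have hWm : MeasurableSet (⋃ p ∈ F, Bl1 p.val.1 p.val.2) :=
        F.measurableSet_biUnion fun p _ => measurableSet_Bl1 _ _
      have hWfin : volume (⋃ p ∈ F, Bl1 p.val.1 p.val.2) ≠ ∞ :=
        ((measure_mono hWsub).trans_lt (lt_top_iff_ne_top.2 hfin)).ne
      rw [measure_diff hWsub hWm.nullMeasurableSet hWfin]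
      have hWvol : volume (⋃ p ∈ F, Bl1 p.val.1 p.val.2)
          = ∑ p ∈ F, volume (Bl1 p.val.1 p.val.2) := by
        apply measure_biUnion_finset
        · intro p _ q _ hpq
          exact hudisj p.2 q.2 (fun h => hpq (Subtype.coe_injective h))
        · exact fun p _ => measurableSet_Bl1 _ _
      rw [hWvol, tsub_le_iff_right]
      have := hFsum.le
      calc volume U ≤ (volume U - ENNReal.ofReal (ε/2)) + ENNReal.ofReal (ε/2) :=
            le_tsub_add
        _ ≤ (∑ p ∈ F, volume (Bl1 p.val.1 p.val.2)) + ENNReal.ofReal (ε/2) :=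
            add_le_add this le_rfl
        _ = ENNReal.ofReal (ε/2) + ∑ p ∈ F, volume (Bl1 p.val.1 p.val.2) :=
            add_comm _ _
  -- choose outer radii for the tents
  set n : ℕ := F.card with hn
  have hε' : (0:ℝ) < ε / (2 * (n + 1)) := by positivity
  have hε'0 : (ENNReal.ofReal (ε / (2 * (n + 1)))) ≠ 0 := by
    simp [ENNReal.ofReal_eq_zero, not_le]
    linarith
  choose R hR1 hR2 using fun p : ↑u =>
    exists_shell p.val.1 (hrpos p).le (ε := ENNReal.ofReal (ε / (2 * (n + 1)))) hε'0
  -- the approximating network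
  set g : (Fin d → ℝ) → ℝ := fun x => ∑ p ∈ F, tent p.val.1 p.val.2 (R p) x with hg
  have hgnet : IsNet d g :=
    isNet_finset_sum F _ (fun p _ => isNet_tent p.val.1 p.val.2 (R p))
  refine ⟨g, hgnet, ?_⟩
  -- notation for the error bounds
  set WW : Set (Fin d → ℝ) := ⋃ p ∈ F, Bl1 p.val.1 p.val.2 with hWW
  set SH : ↑u → (Fin d → ℝ) → ℝ :=
    fun p => (Bl1 p.val.1 (R p) \ Bl1 p.val.1 p.val.2).indicator (fun _ => (1:ℝ)) with hSH
  set h : (Fin d → ℝ) → ℝ :=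
    fun x => (U \ WW).indicator (fun _ => (1:ℝ)) x + ∑ p ∈ F, SH p x with hh
  have hSH_nonneg : ∀ p x, 0 ≤ SH p x := fun p x => indicator_nonneg (fun _ _ => zero_le_one) x
  have htent_nonneg : ∀ (p : ↑u) x, 0 ≤ tent p.val.1 p.val.2 (R p) x :=
    fun p x => tent_nonneg (hR1 p).le x
  have hg_nonneg : ∀ x, 0 ≤ g x := fun x => Finset.sum_nonneg fun p _ => htent_nonneg p x
  have hind_nonneg : ∀ x, 0 ≤ U.indicator (fun _ => (1:ℝ)) x :=
    fun x => indicator_nonneg (fun _ _ => zero_le_one) x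
  have hind_le_one : ∀ x, U.indicator (fun _ => (1:ℝ)) x ≤ 1 := by
    intro x
    by_cases hx : x ∈ U
    · rw [indicator_of_mem hx]
    · rw [indicator_of_notMem hx]; exact zero_le_one
  -- pointwise bound
  have hpt : ∀ x, |U.indicator (fun _ => (1:ℝ)) x - g x| ≤ h x := by
    intro x
    have hsumSH : (0:ℝ) ≤ ∑ p ∈ F, SH p x := Finset.sum_nonneg fun p _ => hSH_nonneg p x
    have hind2_nonneg : (0:ℝ) ≤ (U \ WW).indicator (fun _ => (1:ℝ)) x :=
      indicator_nonneg (fun _ _ => zero_le_one) x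
    rw [abs_sub_le_iff]
    constructor
    · by_cases hxW : x ∈ WW
      · obtain ⟨p₀, hp₀F, hx0⟩ := mem_iUnion₂.1 hxW
        have h1 : (1:ℝ) ≤ g x := by
          have := tent_eq_one (hR1 p₀) hx0
          calc (1:ℝ) = tent p₀.val.1 p₀.val.2 (R p₀) x := this.symm
            _ ≤ g x := Finset.single_le_sum (fun p _ => htent_nonneg p x) hp₀F
        have := hind_le_one x
        rw [hh]
        simp only
        linarith
      · have hle : U.indicator (fun _ => (1:ℝ)) x ≤ (U \ WW).indicator (fun _ => (1:ℝ)) x := by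
          by_cases hx : x ∈ U
          · rw [indicator_of_mem hx, indicator_of_mem (show x ∈ U \ WW from ⟨hx, hxW⟩)]
          · rw [indicator_of_notMem hx]; exact hind2_nonneg
        have := hg_nonneg x
        rw [hh]
        simp only
        linarith
    · by_cases hxW : x ∈ WW
      · obtain ⟨p₀, hp₀F, hx0⟩ := mem_iUnion₂.1 hxW
        have hxU : x ∈ U := hBsubU p₀ hx0
        have hindx : U.indicator (fun _ => (1:ℝ)) x = 1 := indicator_of_mem hxU _
        have hsplit : g x = tent p₀.val.1 p₀.val.2 (R p₀) x
            + ∑ p ∈ F.erase p₀, tent p.val.1 p.val.2 (R p) x := by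
          rw [hg]
          exact (Finset.add_sum_erase F _ hp₀F).symm
        have htep : ∀ p ∈ F.erase p₀, tent p.val.1 p.val.2 (R p) x ≤ SH p x := by
          intro p hp
          have hpne : p ≠ p₀ := Finset.ne_of_mem_erase hp
          have hxnot : x ∉ Bl1 p.val.1 p.val.2 := by
            intro hmem
            have hdisj := hudisj p.2 p₀.2 (fun hcontr => hpne (Subtype.coe_injective hcontr))
            exact (Set.disjoint_left.1 hdisj) hmem hx0
          exact tent_le_ind_shell (hR1 p) hxnot
        have hsum1 : ∑ p ∈ F.erase p₀, tent p.val.1 p.val.2 (R p) x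
            ≤ ∑ p ∈ F.erase p₀, SH p x := Finset.sum_le_sum htep
        have hsum2 : ∑ p ∈ F.erase p₀, SH p x ≤ ∑ p ∈ F, SH p x :=
          Finset.sum_le_sum_of_subset_of_nonneg (Finset.erase_subset _ _)
            (fun p hp _ => hSH_nonneg p x)
        have hT1 := tent_eq_one (hR1 p₀) hx0
        rw [hh]
        simp only
        rw [hindx]
        linarith
      · have hgle : g x ≤ ∑ p ∈ F, SH p x := by
          rw [hg]
          apply Finset.sum_le_sum
          intro p hp
          apply tent_le_ind_shell (hR1 p)
          intro hmem
          exact hxW (mem_iUnion₂.2 ⟨p, hp, hmem⟩)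
        have := hind_nonneg x
        rw [hh]
        simp only
        linarith
  -- integrability facts
  have hWWm : MeasurableSet WW := F.measurableSet_biUnion fun p _ => measurableSet_Bl1 _ _
  have hUWm : MeasurableSet (U \ WW) := hU.measurableSet.diff hWWm
  have hUWfin : volume (U \ WW) < ∞ :=
    (measure_mono diff_subset).trans_lt (lt_top_iff_ne_top.2 hfin)
  have hind2_int : Integrable ((U \ WW).indicator (fun _ => (1:ℝ))) volume := by
    rw [integrable_indicator_iff hUWm]
    exact integrableOn_const hUWfin.ne
  have hSH_int : ∀ p : ↑u, Integrable (SH p) volume := by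
    intro p
    rw [hSH]
    simp only
    rw [integrable_indicator_iff ((measurableSet_Bl1 _ _).diff (measurableSet_Bl1 _ _))]
    refine integrableOn_const ?_
    exact ((measure_mono diff_subset).trans_lt (vol_Bl1_lt_top _ _)).ne
  have hh_int : Integrable h volume := by
    rw [hh]
    exact hind2_int.add (integrable_finset_sum F fun p _ => hSH_int p)
  have hh_nonneg : ∀ x, 0 ≤ h x := by
    intro x
    rw [hh]
    simp only
    exact add_nonneg (indicator_nonneg (fun _ _ => zero_le_one) x)
      (Finset.sum_nonneg fun p _ => hSH_nonneg p x)
  -- integral estimate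
  have hint1 : ∫ x in K, |U.indicator (fun _ => (1:ℝ)) x - g x| ≤ ∫ x in K, h x := by
    apply integral_mono_of_nonneg
    · exact Filter.Eventually.of_forall fun x => abs_nonneg _
    · exact hh_int.restrict
    · exact Filter.Eventually.of_forall hpt
  have hint2 : ∫ x in K, h x ≤ ∫ x, h x :=
    setIntegral_le_integral hh_int (Filter.Eventually.of_forall hh_nonneg)
  have hint3 : ∫ x, h x = (volume (U \ WW)).toReal
      + ∑ p ∈ F, (volume (Bl1 p.val.1 (R p) \ Bl1 p.val.1 p.val.2)).toReal := by
    rw [hh]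
    rw [integral_add hind2_int (integrable_finset_sum F fun p _ => hSH_int p)]
    congr 1
    · rw [integral_indicator_const (1:ℝ) hUWm, smul_eq_mul, mul_one, measureReal_def]
    · rw [integral_finset_sum F fun p _ => hSH_int p]
      apply Finset.sum_congr rfl
      intro p _
      rw [hSH]
      simp only
      rw [integral_indicator_const (1:ℝ) ((measurableSet_Bl1 _ _).diff (measurableSet_Bl1 _ _)),
        smul_eq_mul, mul_one, measureReal_def]
  have hb1 : (volume (U \ WW)).toReal ≤ ε/2 :=
    ENNReal.toReal_le_of_le_ofReal (by linarith) hF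
  have hb2 : ∑ p ∈ F, (volume (Bl1 p.val.1 (R p) \ Bl1 p.val.1 p.val.2)).toReal ≤ ε/2 := by
    have hbound : ∀ p ∈ F, (volume (Bl1 p.val.1 (R p) \ Bl1 p.val.1 p.val.2)).toReal
        ≤ ε / (2 * (n + 1)) :=
      fun p _ => ENNReal.toReal_le_of_le_ofReal hε'.le (hR2 p)
    calc ∑ p ∈ F, (volume (Bl1 p.val.1 (R p) \ Bl1 p.val.1 p.val.2)).toReal
        ≤ ∑ _p ∈ F, ε / (2 * (n + 1)) := Finset.sum_le_sum hbound
      _ = n * (ε / (2 * (n + 1))) := by rw [Finset.sum_const, hn]; simp [mul_comm]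
      _ ≤ ε/2 := by
          have hn1 : (0:ℝ) < 2 * ((n:ℝ) + 1) := by positivity
          rw [mul_div_assoc', div_le_div_iff₀ hn1 (by norm_num : (0:ℝ) < 2)]
          nlinarith [hε.le, Nat.cast_nonneg (α := ℝ) n]
  calc ∫ x in K, |U.indicator (fun _ => (1:ℝ)) x - g x| ≤ ∫ x, h x := hint1.trans hint2
    _ ≤ ε/2 + ε/2 := by rw [hint3]; exact add_le_add hb1 hb2
    _ = ε := by ring

lemma abs_indicator_sub_indicator_le {A U : Set (Fin d → ℝ)} (hAU : A ⊆ U) (x : Fin d → ℝ) :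
    |A.indicator (fun _ => (1:ℝ)) x - U.indicator (fun _ => (1:ℝ)) x|
      ≤ (U \ A).indicator (fun _ => (1:ℝ)) x := by
  by_cases hxA : x ∈ A
  · rw [indicator_of_mem hxA, indicator_of_mem (hAU hxA)]
    simp [indicator_nonneg (fun _ _ => (zero_le_one : (0:ℝ) ≤ 1)) x]
  · rw [indicator_of_notMem hxA]
    by_cases hxU : x ∈ U
    · rw [indicator_of_mem hxU, indicator_of_mem (show x ∈ U \ A from ⟨hxU, hxA⟩)]
      simp
    · rw [indicator_of_notMem hxU, indicator_of_notMem (fun hc => hxU hc.1)]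
      simp

end AdderAux

open AdderAux in
set_option maxHeartbeats 1000000 in
theorem addernet_two_layer_universal_approximation'
    (d : ℕ) (K : Set (Fin d → ℝ)) (hK : IsCompact K)
    (f : (Fin d → ℝ) → ℝ) (hf : IntegrableOn f K volume) :
    ∀ ε > 0, ∃ g, IsNet d g ∧ (∫ x in K, |f x - g x|) ≤ ε := by
  intro ε hε
  rcases Nat.eq_zero_or_pos d with h0 | hd
  · subst h0
    refine ⟨(fun _ => f (fun i => i.elim0)), isNet_const _, ?_⟩
    have hzero : ∀ x : Fin 0 → ℝ, |f x - f (fun i => i.elim0)| = 0 := by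
      intro x
      have hx : x = (fun i => i.elim0) := by funext i; exact i.elim0
      rw [hx]
      simp
    calc (∫ x in K, |f x - f (fun i => i.elim0)|) = ∫ _x in K, (0:ℝ) :=
          integral_congr_ae (Filter.Eventually.of_forall fun x => hzero x)
      _ = 0 := integral_zero _ _
      _ ≤ ε := hε.le
  · set μ := volume.restrict K with hμ
    have hKm : MeasurableSet K := hK.isClosed.measurableSet
    set P : ((Fin d → ℝ) → ℝ) → Prop :=
      fun h => ∀ δ : ℝ, 0 < δ → ∃ g, IsNet d g ∧ (∫ x in K, |h x - g x|) ≤ δ with hP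
    have hint_of_net : ∀ {g : (Fin d → ℝ) → ℝ}, IsNet d g → Integrable g μ := by
      intro g hg
      exact (isNet_continuous hg).continuousOn.integrableOn_compact hK
    have key : ∀ ⦃h : (Fin d → ℝ) → ℝ⦄, Integrable h μ → P h := by
      apply Integrable.induction
      · -- indicators
        intro c s hs _ δ hδ
        set A := s ∩ K with hA
        have hAm : MeasurableSet A := hs.inter hKm
        have hAfin : volume A ≠ ∞ :=
          ((measure_mono inter_subset_right).trans_lt hK.measure_lt_top).ne
        have hc1 : (0:ℝ) < |c| + 1 := by positivity
        set ε₁ : ℝ := δ / (2 * (|c| + 1)) with hε₁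
        have hε₁pos : 0 < ε₁ := by positivity
        have hε₁0 : ENNReal.ofReal ε₁ ≠ 0 := by
          simp [ENNReal.ofReal_eq_zero, not_le]
          linarith
        obtain ⟨U, hAU, hUopen, hUfin, hUdiff⟩ := hAm.exists_isOpen_diff_lt hAfin hε₁0
        obtain ⟨g, hgnet, hgint⟩ := approx_open hd hUopen hUfin.ne hε₁pos K
        refine ⟨fun x => c * g x, isNet_smul c hgnet, ?_⟩
        have hgμ : Integrable g μ := hint_of_net hgnet
        have hUind_int : Integrable (U.indicator (fun _ => (1:ℝ))) μ := by
          rw [integrable_indicator_iff hUopen.measurableSet]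
          refine integrableOn_const ?_
          exact ((Measure.restrict_apply_le K U).trans_lt hUfin).ne
        have hdiff_int : Integrable ((U \ A).indicator (fun _ => (1:ℝ))) volume := by
          rw [integrable_indicator_iff (hUopen.measurableSet.diff hAm)]
          refine integrableOn_const ?_
          exact ((measure_mono diff_subset).trans_lt (lt_top_iff_ne_top.2 hUfin.ne)).ne
        -- step 1: replace s by A on K
        have hstep1 : (∫ x in K, |s.indicator (fun _ => c) x - c * g x|)
            = ∫ x in K, |c| * |A.indicator (fun _ => (1:ℝ)) x - g x| := by
          apply setIntegral_congr_fun hKm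
          intro x hxK
          show |s.indicator (fun _ => c) x - c * g x| = |c| * |A.indicator (fun _ => (1:ℝ)) x - g x|
          have : s.indicator (fun _ => c) x = c * A.indicator (fun _ => (1:ℝ)) x := by
            by_cases hxs : x ∈ s
            · rw [indicator_of_mem hxs, indicator_of_mem (show x ∈ A from ⟨hxs, hxK⟩), mul_one]
            · rw [indicator_of_notMem hxs,
                indicator_of_notMem (fun hc => hxs hc.1), mul_zero]
          rw [this, ← mul_sub, abs_mul]
        have hAind_int : Integrable (A.indicator (fun _ => (1:ℝ))) μ := by
          rw [integrable_indicator_iff hAm]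
          refine integrableOn_const ?_
          exact ((Measure.restrict_apply_le K A).trans_lt (lt_top_iff_ne_top.2 hAfin)).ne
        -- step 2: triangle inequality
        have hiU : Integrable (fun x => |U.indicator (fun _ => (1:ℝ)) x - g x|) μ :=
          (hUind_int.sub hgμ).abs
        have hiD : Integrable (fun x => (U \ A).indicator (fun _ => (1:ℝ)) x) μ :=
          hdiff_int.restrict
        have hstep2 : (∫ x in K, |A.indicator (fun _ => (1:ℝ)) x - g x|)
            ≤ (∫ x in K, (U \ A).indicator (fun _ => (1:ℝ)) x)
              + ∫ x in K, |U.indicator (fun _ => (1:ℝ)) x - g x| := by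
          have hsplit : (∫ x in K, ((U \ A).indicator (fun _ => (1:ℝ)) x
              + |U.indicator (fun _ => (1:ℝ)) x - g x|))
              = (∫ x in K, (U \ A).indicator (fun _ => (1:ℝ)) x)
                + ∫ x in K, |U.indicator (fun _ => (1:ℝ)) x - g x| := integral_add hiD hiU
          rw [← hsplit]
          apply integral_mono_of_nonneg (Filter.Eventually.of_forall fun x => abs_nonneg _)
            (hiD.add hiU)
          apply Filter.Eventually.of_forall
          intro x
          calc |A.indicator (fun _ => (1:ℝ)) x - g x|
              ≤ |A.indicator (fun _ => (1:ℝ)) x - U.indicator (fun _ => (1:ℝ)) x|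
                + |U.indicator (fun _ => (1:ℝ)) x - g x| := abs_sub_le _ _ _
            _ ≤ (U \ A).indicator (fun _ => (1:ℝ)) x
                + |U.indicator (fun _ => (1:ℝ)) x - g x| := by
                have := abs_indicator_sub_indicator_le hAU x
                linarith
        have hstep3 : (∫ x in K, (U \ A).indicator (fun _ => (1:ℝ)) x) ≤ ε₁ := by
          have h1 : (∫ x in K, (U \ A).indicator (fun _ => (1:ℝ)) x)
              ≤ ∫ x, (U \ A).indicator (fun _ => (1:ℝ)) x :=
            setIntegral_le_integral hdiff_int
              (Filter.Eventually.of_forall fun x => indicator_nonneg (fun _ _ => zero_le_one) x)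
          have h2 : (∫ x, (U \ A).indicator (fun _ => (1:ℝ)) x) = (volume (U \ A)).toReal := by
            rw [integral_indicator_const (1:ℝ) (hUopen.measurableSet.diff hAm), smul_eq_mul,
              mul_one, measureReal_def]
          rw [h2] at h1
          exact h1.trans (ENNReal.toReal_le_of_le_ofReal hε₁pos.le hUdiff.le)
        -- put it together
        rw [hstep1, integral_const_mul]
        have htotal : (∫ x in K, |A.indicator (fun _ => (1:ℝ)) x - g x|) ≤ 2 * ε₁ := by
          have := hstep2.trans (add_le_add hstep3 hgint)
          linarith
        have habs : (0:ℝ) ≤ ∫ x in K, |A.indicator (fun _ => (1:ℝ)) x - g x| :=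
          integral_nonneg fun x => abs_nonneg _
        calc |c| * ∫ x in K, |A.indicator (fun _ => (1:ℝ)) x - g x|
            ≤ |c| * (2 * ε₁) := mul_le_mul_of_nonneg_left htotal (abs_nonneg c)
          _ = (|c| / (|c| + 1)) * δ := by rw [hε₁]; field_simp
          _ ≤ 1 * δ := mul_le_mul_of_nonneg_right
              ((div_le_one hc1).2 (by linarith)) hδ.le
          _ = δ := one_mul δ
      · -- addition
        intro h₁ h₂ _ hint₁ hint₂ hP₁ hP₂ δ hδ
        obtain ⟨g₁, hg₁, hb₁⟩ := hP₁ (δ/2) (by linarith)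
        obtain ⟨g₂, hg₂, hb₂⟩ := hP₂ (δ/2) (by linarith)
        refine ⟨g₁ + g₂, isNet_add hg₁ hg₂, ?_⟩
        have hi₁ : Integrable (fun x => |h₁ x - g₁ x|) μ := (hint₁.sub (hint_of_net hg₁)).abs
        have hi₂ : Integrable (fun x => |h₂ x - g₂ x|) μ := (hint₂.sub (hint_of_net hg₂)).abs
        have hmono : (∫ x in K, |(h₁ + h₂) x - (g₁ + g₂) x|)
            ≤ ∫ x in K, (|h₁ x - g₁ x| + |h₂ x - g₂ x|) := by
          apply integral_mono_of_nonneg (Filter.Eventually.of_forall fun x => abs_nonneg _)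
            (hi₁.add hi₂)
          apply Filter.Eventually.of_forall
          intro x
          simp only [Pi.add_apply]
          calc |h₁ x + h₂ x - (g₁ x + g₂ x)| = |(h₁ x - g₁ x) + (h₂ x - g₂ x)| := by ring_nf
            _ ≤ |h₁ x - g₁ x| + |h₂ x - g₂ x| := abs_add_le _ _
        rw [integral_add hi₁ hi₂] at hmono
        linarith
      · -- closedness in L¹
        have hset : {F : (Fin d → ℝ) →₁[μ] ℝ | P F} =
            closure {G : (Fin d → ℝ) →₁[μ] ℝ |
              ∃ g, IsNet d g ∧ (G : (Fin d → ℝ) → ℝ) =ᵐ[μ] g} := by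
          ext F
          simp only [mem_setOf_eq]
          constructor
          · intro hPF
            rw [Metric.mem_closure_iff]
            intro η hη
            obtain ⟨g, hgnet, hgb⟩ := hPF (η/2) (by linarith)
            have hgμ : Integrable g μ := hint_of_net hgnet
            refine ⟨hgμ.toL1 g, ⟨g, hgnet, hgμ.coeFn_toL1⟩, ?_⟩
            have hdist : dist F (hgμ.toL1 g) = ∫ x, |F x - g x| ∂μ := by
              rw [dist_eq_norm, L1.norm_eq_integral_norm]
              apply integral_congr_ae
              filter_upwards [Lp.coeFn_sub F (hgμ.toL1 g), hgμ.coeFn_toL1] with x h1 h2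
              rw [h1, Pi.sub_apply, h2, Real.norm_eq_abs]
            rw [hdist]
            calc (∫ x, |F x - g x| ∂μ) ≤ η/2 := hgb
              _ < η := by linarith
          · intro hcl δ hδ
            rw [Metric.mem_closure_iff] at hcl
            obtain ⟨G, ⟨g, hgnet, hGg⟩, hdist⟩ := hcl δ hδ
            refine ⟨g, hgnet, ?_⟩
            have hdist' : dist F G = ∫ x, |F x - g x| ∂μ := by
              rw [dist_eq_norm, L1.norm_eq_integral_norm]
              apply integral_congr_ae
              filter_upwards [Lp.coeFn_sub F G, hGg] with x h1 h2
              rw [h1, Pi.sub_apply, h2, Real.norm_eq_abs]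
            rw [hdist'] at hdist
            exact hdist.le
        rw [hset]
        exact isClosed_closure
      · -- respects a.e. equality
        intro h₁ h₂ hae _ hP₁ δ hδ
        obtain ⟨g, hgnet, hgb⟩ := hP₁ δ hδ
        refine ⟨g, hgnet, ?_⟩
        have : (∫ x in K, |h₂ x - g x|) = ∫ x in K, |h₁ x - g x| := by
          apply integral_congr_ae
          filter_upwards [hae] with x hx
          rw [hx]
        rw [this]
        exact hgb
    exact key hf ε hε

/-- Theorem 1 (universal approximation of two-layer AdderNets): functions of the form
`x ↦ Σᵢ aᵢ · ReLU(‖Wᵢ - x‖₁ + bᵢ)` are dense in `L¹(K)` for every compact `K ⊆ ℝ^d`. -/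
theorem addernet_two_layer_universal_approximation
    (d : ℕ) (K : Set (Fin d → ℝ)) (hK : IsCompact K)
    (f : (Fin d → ℝ) → ℝ) (hf : IntegrableOn f K volume) :
    ∀ ε > 0, ∃ (t : ℕ) (a b : Fin t → ℝ) (W : Fin t → Fin d → ℝ),
      (∫ x in K, |f x - ∑ i, a i * max ((∑ j, |W i j - x j|) + b i) 0|) ≤ ε := by
  intro ε hε
  obtain ⟨g, ⟨t, a, b, W, rfl⟩, hb⟩ :=
    addernet_two_layer_universal_approximation' d K hK f hf ε hε
  exact ⟨t, a, b, W, hb⟩
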